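/- (Aubrun–Nechita) Every multiplicative system of norms is equal to the q-norm for some q ∈ [1,∞]; that is, if (‖·‖_n)_{n≥1} is a multiplicative system of norms, then there exists q ∈ [1,∞] such that ‖x‖_n equals the ℓ^q-norm of x for every n ≥ 1 and every x ∈ ℝ^n. -/

import Mathlib

open scoped NNReal ENNReal BigOperators

/-- The `ℓ^q`-norm on `ℝⁿ`, for `q ∈ [1,∞]`. -/
noncomputable def lqNorm (q : ℝ≥0∞) {n : ℕ} (x : Fin n → ℝ) : ℝ :=
  if q = ∞ then ((Finset.univ.sup fun i => ‖x i‖₊ : ℝ≥0) : ℝ)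
  else (∑ i, |x i| ^ q.toReal) ^ (1 / q.toReal)

/-- A system of norms: a norm `N n` on `ℝⁿ` for each `n`, compatible with injections
`f : Fin m → Fin n` (where `fx` is `x` on the image of `f` and `0` elsewhere). -/
structure NormSystem where
  N : ∀ n : ℕ, (Fin n → ℝ) → ℝ
  add_le : ∀ {n : ℕ} (x y : Fin n → ℝ), N n (x + y) ≤ N n x + N n y
  smul_eq : ∀ {n : ℕ} (c : ℝ) (x : Fin n → ℝ), N n (c • x) = |c| * N n x
  eq_zero : ∀ {n : ℕ} (x : Fin n → ℝ), N n x = 0 → x = 0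
  inj_eq : ∀ {m n : ℕ} (f : Fin m → Fin n), Function.Injective f →
    ∀ x : Fin m → ℝ,
      N n (fun j => ∑ i ∈ Finset.univ.filter (fun i => f i = j), x i) = N m x

/-- Multiplicativity of a system of norms, with respect to the fixed bijection
`finProdFinEquiv : Fin m × Fin n ≃ Fin (m * n)`. -/
def NormSystem.IsMultiplicative (S : NormSystem) : Prop :=
  ∀ {m n : ℕ} (x : Fin m → ℝ) (y : Fin n → ℝ),
    S.N (m * n) (fun k => x (finProdFinEquiv.symm k).1 * y (finProdFinEquiv.symm k).2)
      = S.N m x * S.N n y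


namespace AubrunNechita
open Finset

variable (S : NormSystem)

lemma N_zero (n : ℕ) : S.N n 0 = 0 := by
  have := S.smul_eq (n := n) 0 0
  simpa using this

lemma N_nonneg {n : ℕ} (x : Fin n → ℝ) : 0 ≤ S.N n x := by
  have h1 := S.add_le x (-x)
  have h2 : S.N n (-x) = S.N n x := by
    have := S.smul_eq (n := n) (-1) x
    simpa using this
  have h0 : S.N n (x + -x) = 0 := by rw [add_neg_cancel, N_zero]
  nlinarith

lemma N_pos {n : ℕ} {x : Fin n → ℝ} (hx : x ≠ 0) : 0 < S.N n x := by
  rcases lt_or_eq_of_le (N_nonneg S x) with h | h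
  · exact h
  · exact absurd (S.eq_zero x h.symm) hx

lemma N_sum_le {n : ℕ} {ι : Type*} (s : Finset ι) (g : ι → Fin n → ℝ) :
    S.N n (∑ v ∈ s, g v) ≤ ∑ v ∈ s, S.N n (g v) := by
  classical
  induction s using Finset.induction with
  | empty => simp [N_zero]
  | insert a s h ih =>
    rw [Finset.sum_insert h, Finset.sum_insert h]
    exact le_trans (S.add_le _ _) (by linarith)

lemma N_perm {n : ℕ} (σ : Equiv.Perm (Fin n)) (x : Fin n → ℝ) :
    S.N n (fun j => x (σ.symm j)) = S.N n x := by
  have h := S.inj_eq σ σ.injective x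
  have hfe : ∀ j, (Finset.univ.filter (fun i => σ i = j)) = {σ.symm j} := by
    intro j; ext i
    simp [Equiv.apply_eq_iff_eq_symm_apply]
  calc S.N n (fun j => x (σ.symm j))
      = S.N n (fun j => ∑ i ∈ Finset.univ.filter (fun i => σ i = j), x i) := by
        congr 1; funext j; rw [hfe j, Finset.sum_singleton]
    _ = S.N n x := h


lemma N_sign (hmul : S.IsMultiplicative) {n : ℕ} (ε : Fin n → ℝ)
    (hε : ∀ i, ε i = 1 ∨ ε i = -1) (x : Fin n → ℝ) :
    S.N n (fun i => ε i * x i) = S.N n x := by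
  classical
  set e : Fin 2 → ℝ := ![1, -1] with he
  have erev : ∀ j2 : Fin 2, e j2.rev = - e j2 := by
    intro j2
    fin_cases j2 <;> simp [he, Fin.rev] <;> norm_num
  have hepos : 0 < S.N 2 e := by
    apply N_pos
    intro h
    have := congrFun h 0
    simp [he] at this
  set g : Fin n × Fin 2 → Fin n × Fin 2 := fun p => (p.1, if ε p.1 = 1 then p.2 else p.2.rev) with hg
  have hginv : Function.Involutive g := by
    intro p
    simp only [hg]
    by_cases h : ε p.1 = 1 <;> simp [h, Fin.rev_rev]
  set σ : Equiv.Perm (Fin (n * 2)) :=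
    (finProdFinEquiv.symm.trans (hginv.toPerm g)).trans finProdFinEquiv with hσ
  have hσapp : ∀ k, finProdFinEquiv.symm (σ k) = g (finProdFinEquiv.symm k) := by
    intro k
    simp [hσ, Function.Involutive.toPerm]
  have hσsymm : ∀ k, σ.symm k = σ k := by
    intro k
    rw [Equiv.symm_apply_eq]
    apply finProdFinEquiv.symm.injective
    rw [hσapp, hσapp]
    exact (hginv _).symm
  have key := N_perm S σ (fun k => x (finProdFinEquiv.symm k).1 * e (finProdFinEquiv.symm k).2)
  have lhs_eq : (fun j => (fun k => x (finProdFinEquiv.symm k).1 * e (finProdFinEquiv.symm k).2) (σ.symm j))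
      = fun k => (ε (finProdFinEquiv.symm k).1 * x (finProdFinEquiv.symm k).1) * e (finProdFinEquiv.symm k).2 := by
    funext j
    simp only [hσsymm, hσapp]
    rcases hε (finProdFinEquiv.symm j).1 with h | h
    · simp only [hg, h, if_true]
      ring
    · have hne : ¬ (ε (finProdFinEquiv.symm j).1 = 1) := by rw [h]; norm_num
      simp only [hg, hne, if_false]
      rw [erev, h]; ring
  rw [lhs_eq] at key
  have h1 := hmul (fun i => ε i * x i) e
  beta_reduce at h1
  have h2 := hmul x e
  have := (h1.symm.trans key).trans h2
  exact mul_right_cancel₀ (ne_of_gt hepos) this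

lemma N_abs (hmul : S.IsMultiplicative) {n : ℕ} (x : Fin n → ℝ) :
    S.N n (fun i => |x i|) = S.N n x := by
  have h := N_sign S hmul (fun i => if x i < 0 then (-1:ℝ) else 1)
    (fun i => by by_cases h : x i < 0 <;> simp [h]) x
  rw [← h]
  congr 1
  funext i
  by_cases h : x i < 0
  · simp [h, abs_of_neg h]
  · simp [h, abs_of_nonneg (le_of_not_gt h)]


lemma N_update_le (hmul : S.IsMultiplicative) {n : ℕ} (y : Fin n → ℝ) (i₀ : Fin n)
    (t : ℝ) (ht : |t| ≤ 1) :
    S.N n (Function.update y i₀ (t * y i₀)) ≤ S.N n y := by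
  classical
  set y' : Fin n → ℝ := fun i => (if i = i₀ then (-1:ℝ) else 1) * y i with hy'
  have hy'N : S.N n y' = S.N n y :=
    N_sign S hmul _ (fun i => by by_cases h : i = i₀ <;> simp [h]) y
  have hdecomp : Function.update y i₀ (t * y i₀) = ((1+t)/2) • y + ((1-t)/2) • y' := by
    funext i
    by_cases h : i = i₀
    · subst h
      simp [Function.update_self, hy']
      ring
    · simp [Function.update_of_ne h, hy', h]
      ring
  rw [hdecomp]
  calc S.N n (((1+t)/2) • y + ((1-t)/2) • y')
      ≤ S.N n (((1+t)/2) • y) + S.N n (((1-t)/2) • y') := S.add_le _ _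
    _ = |(1+t)/2| * S.N n y + |(1-t)/2| * S.N n y' := by rw [S.smul_eq, S.smul_eq]
    _ = ((1+t)/2) * S.N n y + ((1-t)/2) * S.N n y := by
        rw [hy'N, abs_of_nonneg (by cases abs_le.mp ht; linarith),
          abs_of_nonneg (by cases abs_le.mp ht; linarith)]
    _ = S.N n y := by ring

lemma N_mono (hmul : S.IsMultiplicative) {n : ℕ} (x y : Fin n → ℝ)
    (h : ∀ i, |x i| ≤ |y i|) : S.N n x ≤ S.N n y := by
  classical
  set t : Fin n → ℝ := fun i => if y i = 0 then 0 else x i / y i with hht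
  have htle : ∀ i, |t i| ≤ 1 := by
    intro i
    by_cases hyi : y i = 0
    · simp [hht, hyi]
    · simp only [hht, hyi, if_false, abs_div]
      rw [div_le_one (abs_pos.mpr hyi)]
      exact h i
  have hxt : ∀ i, x i = t i * y i := by
    intro i
    by_cases hyi : y i = 0
    · have : |x i| ≤ 0 := by simpa [hyi] using h i
      have : x i = 0 := abs_nonpos_iff.mp this
      simp [hht, hyi, this]
    · simp only [hht, hyi, if_false]
      rw [div_mul_cancel₀ _ hyi]
  set z : ℕ → (Fin n → ℝ) := fun k i => if (i : ℕ) < k then x i else y i with hz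
  have hstep : ∀ k, S.N n (z (k+1)) ≤ S.N n (z k) := by
    intro k
    by_cases hk : k < n
    · set i₀ : Fin n := ⟨k, hk⟩ with hi₀
      have hzz : z (k+1) = Function.update (z k) i₀ (t i₀ * (z k) i₀) := by
        funext i
        by_cases h1 : i = i₀
        · subst h1
          have h3 : ¬ ((i₀ : ℕ) < k) := by simp [hi₀]
          simp [Function.update_self, hz, h3, hi₀, ← hxt]
        · have h2 : (i : ℕ) < k + 1 ↔ (i : ℕ) < k := by
            constructor
            · intro hh
              rcases Nat.lt_succ_iff_lt_or_eq.mp hh with h3 | h3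
              · exact h3
              · exact absurd (Fin.ext h3 : i = i₀) h1
            · intro hh; omega
          simp [Function.update_of_ne h1, hz, h2]
      rw [hzz]
      exact N_update_le S hmul (z k) i₀ (t i₀) (htle i₀)
    · have : z (k+1) = z k := by
        funext i
        have : (i:ℕ) < k := lt_of_lt_of_le i.isLt (le_of_not_gt hk)
        simp [hz, this, Nat.lt_succ_of_lt this]
      rw [this]
  have hchain : ∀ k, S.N n (z k) ≤ S.N n (z 0) := by
    intro k
    induction k with
    | zero => exact le_refl _
    | succ k ih => exact le_trans (hstep k) ih
  have hz0 : z 0 = y := by funext i; simp [hz]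
  have hzn : z n = x := by funext i; simp [hz, i.isLt]
  have := hchain n
  rwa [hz0, hzn] at this


/-- `f n` in the informal proof: the norm of the all-ones vector. -/
noncomputable def onesN (S : NormSystem) (n : ℕ) : ℝ := S.N n (fun _ => 1)

lemma N_indicator {m : ℕ} (A : Finset (Fin m)) :
    S.N m (fun j => if j ∈ A then (1:ℝ) else 0) = onesN S A.card := by
  classical
  set emb := A.orderEmbOfFin (rfl : A.card = A.card) with hemb
  have hinj : Function.Injective emb := emb.injective
  have key := S.inj_eq emb hinj (fun _ => (1:ℝ))
  have hfe : (fun j => ∑ i ∈ Finset.univ.filter (fun i => emb i = j), (1:ℝ))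
      = fun j => if j ∈ A then (1:ℝ) else 0 := by
    funext j
    by_cases hj : j ∈ A
    · obtain ⟨i, hi⟩ : ∃ i, emb i = j := by
        have : j ∈ Set.range emb := by
          rw [Finset.range_orderEmbOfFin]
          exact_mod_cast hj
        exact this
      have : Finset.univ.filter (fun i' => emb i' = j) = {i} := by
        ext i'
        simp only [Finset.mem_filter, Finset.mem_univ, true_and, Finset.mem_singleton]
        constructor
        · intro hh; exact hinj (hh.trans hi.symm)
        · intro hh; rw [hh, hi]
      rw [this, Finset.sum_singleton, if_pos hj]
    · have : Finset.univ.filter (fun i' => emb i' = j) = ∅ := by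
        ext i'
        simp only [Finset.mem_filter, Finset.mem_univ, true_and, Finset.notMem_empty,
          iff_false]
        intro hh
        exact hj (hh ▸ A.orderEmbOfFin_mem rfl i')
      rw [this, Finset.sum_empty, if_neg hj]
  rw [hfe] at key
  exact key

lemma onesN_pos {n : ℕ} (hn : 1 ≤ n) : 0 < onesN S n := by
  apply N_pos
  intro h
  have := congrFun h ⟨0, hn⟩
  simp at this

lemma onesN_mul (hmul : S.IsMultiplicative) (m n : ℕ) :
    onesN S (m * n) = onesN S m * onesN S n := by
  have h := hmul (fun _ : Fin m => (1:ℝ)) (fun _ : Fin n => (1:ℝ))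
  have he : (fun k : Fin (m*n) => (fun _ : Fin m => (1:ℝ)) (finProdFinEquiv.symm k).1
      * (fun _ : Fin n => (1:ℝ)) (finProdFinEquiv.symm k).2) = (fun _ : Fin (m*n) => (1:ℝ)) := by
    funext k; norm_num
  rw [he] at h
  exact h

lemma onesN_one (hmul : S.IsMultiplicative) : onesN S 1 = 1 := by
  have h := onesN_mul S hmul 1 1
  have h1 : onesN S (1 * 1) = onesN S 1 := by norm_num
  rw [h1] at h
  have := onesN_pos S (n := 1) le_rfl
  nlinarith

lemma onesN_mono (hmul : S.IsMultiplicative) {m n : ℕ} (h : m ≤ n) :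
    onesN S m ≤ onesN S n := by
  classical
  set A : Finset (Fin n) := Finset.univ.map (Fin.castLEEmb h) with hA
  have hcard : A.card = m := by simp [hA]
  have h1 : S.N n (fun j => if j ∈ A then (1:ℝ) else 0) = onesN S m := by
    rw [N_indicator, hcard]
  rw [← h1]
  apply N_mono S hmul
  intro i
  by_cases hi : i ∈ A <;> simp [hi]

lemma onesN_ge_one (hmul : S.IsMultiplicative) {n : ℕ} (hn : 1 ≤ n) : 1 ≤ onesN S n := by
  have := onesN_mono S hmul hn
  rwa [onesN_one S hmul] at this

lemma onesN_two_le (hmul : S.IsMultiplicative) : onesN S 2 ≤ 2 := by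
  classical
  have hsplit : (fun _ : Fin 2 => (1:ℝ))
      = (fun j => if j ∈ ({0} : Finset (Fin 2)) then (1:ℝ) else 0)
        + (fun j => if j ∈ ({1} : Finset (Fin 2)) then (1:ℝ) else 0) := by
    funext j
    fin_cases j <;> simp
  have h0 : S.N 2 (fun j => if j ∈ ({0} : Finset (Fin 2)) then (1:ℝ) else 0) = 1 := by
    rw [N_indicator]; simpa using onesN_one S hmul
  have h1 : S.N 2 (fun j => if j ∈ ({1} : Finset (Fin 2)) then (1:ℝ) else 0) = 1 := by
    rw [N_indicator]; simpa using onesN_one S hmul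
  have := S.add_le (fun j => if j ∈ ({0} : Finset (Fin 2)) then (1:ℝ) else 0)
    (fun j => if j ∈ ({1} : Finset (Fin 2)) then (1:ℝ) else 0)
  rw [h0, h1, ← hsplit] at this
  unfold onesN
  linarith


lemma onesN_pow (hmul : S.IsMultiplicative) (n k : ℕ) :
    onesN S (n ^ k) = onesN S n ^ k := by
  induction k with
  | zero => simpa [onesN] using onesN_one S hmul
  | succ k ih => rw [pow_succ, onesN_mul S hmul, ih, pow_succ]

lemma onesN_eq_rpow (hmul : S.IsMultiplicative) {n : ℕ} (hn : 1 ≤ n) :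
    onesN S n = (n : ℝ) ^ (Real.logb 2 (onesN S 2)) := by
  rcases eq_or_lt_of_le hn with h1 | h2
  · rw [← h1]; simp [onesN_one S hmul]
  · -- n ≥ 2
    have hn2 : 2 ≤ n := h2
    set a := Real.log (onesN S 2) with ha
    set b := Real.log 2 with hb
    set u := Real.log (onesN S n) with hu
    set v := Real.log n with hv
    have hf2pos : (0:ℝ) < onesN S 2 := onesN_pos S (by norm_num)
    have hfnpos : (0:ℝ) < onesN S n := onesN_pos S hn
    have hage : 0 ≤ a := Real.log_nonneg (onesN_ge_one S hmul (by norm_num))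
    have huge : 0 ≤ u := Real.log_nonneg (onesN_ge_one S hmul hn)
    have hbpos : 0 < b := Real.log_pos (by norm_num)
    have hvpos : 0 < v := Real.log_pos (by exact_mod_cast h2)
    have key : ∀ k : ℕ, 1 ≤ k → (k:ℝ) * |u * b - a * v| ≤ a * b := by
      intro k hk
      set l := Nat.log 2 (n ^ k) with hl
      have hnk0 : n ^ k ≠ 0 := by positivity
      have hlow : 2 ^ l ≤ n ^ k := Nat.pow_log_le_self 2 hnk0
      have hhigh : n ^ k < 2 ^ (l + 1) := Nat.lt_pow_succ_log_self (by norm_num) _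
      -- norm comparisons
      have hN1 : onesN S 2 ^ l ≤ onesN S n ^ k := by
        rw [← onesN_pow S hmul, ← onesN_pow S hmul]
        exact onesN_mono S hmul hlow
      have hN2 : onesN S n ^ k ≤ onesN S 2 ^ (l + 1) := by
        rw [← onesN_pow S hmul, ← onesN_pow S hmul]
        exact onesN_mono S hmul (le_of_lt hhigh)
      have hL1 : (l:ℝ) * a ≤ (k:ℝ) * u := by
        have := Real.log_le_log (by positivity) hN1
        rwa [Real.log_pow, Real.log_pow] at this
      have hL2 : (k:ℝ) * u ≤ ((l:ℝ) + 1) * a := by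
        have := Real.log_le_log (by positivity) hN2
        rwa [Real.log_pow, Real.log_pow, Nat.cast_add, Nat.cast_one] at this
      have hR1 : (l:ℝ) * b ≤ (k:ℝ) * v := by
        have hc : ((2:ℝ)) ^ l ≤ ((n:ℝ)) ^ k := by exact_mod_cast hlow
        have := Real.log_le_log (by positivity) hc
        rwa [Real.log_pow, Real.log_pow] at this
      have hR2 : (k:ℝ) * v ≤ ((l:ℝ) + 1) * b := by
        have hc : ((n:ℝ)) ^ k ≤ ((2:ℝ)) ^ (l+1) := by exact_mod_cast le_of_lt hhigh
        have := Real.log_le_log (by positivity) hc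
        rwa [Real.log_pow, Real.log_pow, Nat.cast_add, Nat.cast_one] at this
      rw [show (k:ℝ) * |u*b - a*v| = |(k:ℝ)*(u*b-a*v)| by
        rw [abs_mul, Nat.abs_cast]]
      rw [abs_le]
      constructor
      · nlinarith
      · nlinarith
    have hzero : u * b - a * v = 0 := by
      by_contra hne
      have hpos : 0 < |u * b - a * v| := abs_pos.mpr hne
      obtain ⟨k, hk⟩ := exists_nat_gt ((a * b) / |u * b - a * v|)
      have hk1 : 1 ≤ k := by
        by_contra hknot
        push_neg at hknot
        interval_cases k
        · simp at hk
          nlinarith [div_nonneg (by nlinarith : (0:ℝ) ≤ a * b) (le_of_lt hpos)]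
      have := key k hk1
      rw [div_lt_iff₀ hpos] at hk
      linarith
    have hu_eq : u = (a / b) * v := by
      field_simp
      nlinarith [hzero]
    have : onesN S n = Real.exp (u) := (Real.exp_log hfnpos).symm
    rw [this, hu_eq]
    rw [Real.rpow_def_of_pos (by positivity : (0:ℝ) < (n:ℝ))]
    rw [Real.logb, ← ha, ← hb, ← hv]
    ring_nf


/-- The distinct absolute values of the nonzero entries. -/
noncomputable def levels {m : ℕ} (y : Fin m → ℝ) : Finset ℝ :=
  (Finset.univ.filter fun i => y i ≠ 0).image fun i => |y i|

/-- The number of entries with absolute value `v`. -/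
noncomputable def cnt {m : ℕ} (y : Fin m → ℝ) (v : ℝ) : ℕ :=
  (Finset.univ.filter fun i => |y i| = v).card

lemma levels_pos {m : ℕ} {y : Fin m → ℝ} {v : ℝ} (hv : v ∈ levels y) : 0 < v := by
  simp only [levels, Finset.mem_image, Finset.mem_filter, Finset.mem_univ, true_and] at hv
  obtain ⟨i, hi, rfl⟩ := hv
  exact abs_pos.mpr hi

lemma cnt_pos {m : ℕ} {y : Fin m → ℝ} {v : ℝ} (hv : v ∈ levels y) : 1 ≤ cnt y v := by
  simp only [levels, Finset.mem_image, Finset.mem_filter, Finset.mem_univ, true_and] at hv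
  obtain ⟨i, hi, rfl⟩ := hv
  apply Finset.card_pos.mpr
  exact ⟨i, Finset.mem_filter.mpr ⟨Finset.mem_univ i, rfl⟩⟩

lemma levels_nonempty {m : ℕ} {y : Fin m → ℝ} (hy : y ≠ 0) : (levels y).Nonempty := by
  have : ∃ i, y i ≠ 0 := by
    by_contra h
    push_neg at h
    exact hy (funext h)
  obtain ⟨i, hi⟩ := this
  exact ⟨|y i|, Finset.mem_image.mpr ⟨i, Finset.mem_filter.mpr ⟨Finset.mem_univ i, hi⟩, rfl⟩⟩

lemma cnt_filter {m : ℕ} {y : Fin m → ℝ} {v : ℝ} (hv : 0 < v) :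
    Finset.univ.filter (fun i => |y i| = v)
      = (Finset.univ.filter fun i => y i ≠ 0).filter (fun i => |y i| = v) := by
  ext i
  simp only [Finset.mem_filter, Finset.mem_univ, true_and]
  constructor
  · intro h
    refine ⟨fun h0 => ?_, h⟩
    rw [h0] at h
    simp at h
    linarith
  · exact And.right

lemma N_level (hmul : S.IsMultiplicative) {m : ℕ} (y : Fin m → ℝ) {v : ℝ} (hv : 0 < v) :
    S.N m (fun i => if |y i| = v then v else 0) = v * onesN S (cnt y v) := by
  classical
  set A := Finset.univ.filter (fun i => |y i| = v) with hA
  have hz : (fun i => if |y i| = v then v else 0)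
      = v • (fun j => if j ∈ A then (1:ℝ) else 0) := by
    funext i
    by_cases h : |y i| = v <;> simp [hA, h]
  rw [hz, S.smul_eq, N_indicator, abs_of_pos hv]
  rfl

lemma N_lower (hmul : S.IsMultiplicative) {m : ℕ} (y : Fin m → ℝ) {v : ℝ}
    (hv : v ∈ levels y) : v * onesN S (cnt y v) ≤ S.N m y := by
  rw [← N_level S hmul y (levels_pos hv)]
  apply N_mono S hmul
  intro i
  by_cases h : |y i| = v
  · rw [if_pos h, abs_of_pos (levels_pos hv), h]
  · rw [if_neg h]; simp

lemma N_upper (hmul : S.IsMultiplicative) {m : ℕ} (y : Fin m → ℝ) :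
    S.N m y ≤ ∑ v ∈ levels y, v * onesN S (cnt y v) := by
  classical
  have hdecomp : y = ∑ v ∈ levels y, (fun i => if |y i| = v then y i else 0) := by
    funext i
    rw [Finset.sum_apply]
    rw [Finset.sum_ite_eq (levels y) (|y i|) (fun _ => y i)]
    by_cases h : y i = 0
    · have hnot : |y i| ∉ levels y := by
        intro hmem
        have := levels_pos hmem
        rw [h] at this
        simp at this
      rw [if_neg hnot, h]
    · rw [if_pos]
      exact Finset.mem_image.mpr ⟨i, Finset.mem_filter.mpr ⟨Finset.mem_univ i, h⟩, rfl⟩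
  calc S.N m y ≤ ∑ v ∈ levels y, S.N m (fun i => if |y i| = v then y i else 0) := by
        nth_rewrite 1 [hdecomp]
        exact N_sum_le S _ _
    _ = ∑ v ∈ levels y, v * onesN S (cnt y v) := by
        apply Finset.sum_congr rfl
        intro v hv
        rw [← N_abs S hmul]
        have : (fun i => |if |y i| = v then y i else 0|) = fun i => if |y i| = v then v else 0 := by
          funext i
          by_cases h : |y i| = v <;> simp [h]
        rw [this, N_level S hmul y (levels_pos hv)]


/-- `c ^ (1/q)`, the `ℓ^q`-norm of a `0/1` vector with `c` ones. -/
noncomputable def gq (q : ℝ≥0∞) (c : ℕ) : ℝ :=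
  if q = ∞ then 1 else (c : ℝ) ^ (1 / q.toReal)

lemma toReal_one_le {q : ℝ≥0∞} (hq : 1 ≤ q) (hqt : q ≠ ∞) : 1 ≤ q.toReal := by
  have := ENNReal.toReal_mono hqt hq
  simpa using this

lemma lq_sum_eq {m : ℕ} (y : Fin m → ℝ) {P : ℝ} (hP : 1 ≤ P) :
    ∑ i, |y i| ^ P = ∑ v ∈ levels y, (cnt y v : ℝ) * v ^ P := by
  classical
  have hPne : P ≠ 0 := by linarith
  set s := Finset.univ.filter (fun i : Fin m => y i ≠ 0) with hs
  have h1 : ∑ i, |y i| ^ P = ∑ i ∈ s, |y i| ^ P := by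
    refine (Finset.sum_subset (Finset.filter_subset _ _) ?_).symm
    intro i _ hi
    have : y i = 0 := by
      by_contra hne
      exact hi (Finset.mem_filter.mpr ⟨Finset.mem_univ i, hne⟩)
    rw [this, abs_zero, Real.zero_rpow hPne]
  rw [h1, Finset.sum_comp (fun v : ℝ => v ^ P) (fun i => |y i|)]
  apply Finset.sum_congr rfl
  intro v hv
  have hvmem : v ∈ levels y := hv
  rw [nsmul_eq_mul]
  congr 2
  rw [cnt, cnt_filter (levels_pos hvmem)]

lemma gq_term {P : ℝ} (hP : 1 ≤ P) {v : ℝ} (hv : 0 < v) (c : ℕ) :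
    (v * (c : ℝ) ^ (1 / P)) ^ P = (c : ℝ) * v ^ P := by
  have hPne : P ≠ 0 := by linarith
  rw [Real.mul_rpow (le_of_lt hv) (Real.rpow_nonneg (Nat.cast_nonneg c) _),
    ← Real.rpow_mul (Nat.cast_nonneg c), one_div_mul_cancel hPne, Real.rpow_one]
  ring

lemma lq_lower {q : ℝ≥0∞} (hq : 1 ≤ q) {m : ℕ} (y : Fin m → ℝ) {v : ℝ}
    (hv : v ∈ levels y) : v * gq q (cnt y v) ≤ lqNorm q y := by
  classical
  by_cases hqt : q = ∞
  · subst hqt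
    rw [gq, if_pos rfl, mul_one, lqNorm, if_pos rfl]
    simp only [levels, Finset.mem_image, Finset.mem_filter, Finset.mem_univ, true_and] at hv
    obtain ⟨i, hi, rfl⟩ := hv
    have h1 : ‖y i‖₊ ≤ Finset.univ.sup fun i => ‖y i‖₊ := Finset.le_sup (f := fun i => ‖y i‖₊) (Finset.mem_univ i)
    calc |y i| = (‖y i‖₊ : ℝ) := by rw [coe_nnnorm, Real.norm_eq_abs]
      _ ≤ _ := NNReal.coe_le_coe.mpr h1
  · set P := q.toReal with hPdef
    have hP : 1 ≤ P := toReal_one_le hq hqt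
    have hPpos : 0 < P := by linarith
    have hvpos := levels_pos hv
    rw [lqNorm, if_neg hqt, gq, if_neg hqt]
    have hsum := lq_sum_eq y hP
    have hle : (v * (cnt y v : ℝ) ^ (1 / P)) ^ P ≤ ∑ i, |y i| ^ P := by
      rw [gq_term hP hvpos, hsum]
      apply Finset.single_le_sum (f := fun w => (cnt y w : ℝ) * w ^ P) _ hv
      intro w hw
      have := levels_pos hw
      positivity
    have h2 := Real.rpow_le_rpow (by positivity) hle (by positivity : (0:ℝ) ≤ 1/P)
    rwa [← Real.rpow_mul (by positivity), mul_one_div_cancel (ne_of_gt hPpos),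
      Real.rpow_one] at h2

lemma lq_upper {q : ℝ≥0∞} (hq : 1 ≤ q) {m : ℕ} {y : Fin m → ℝ} (hy : y ≠ 0)
    {B : ℝ} (hB0 : 0 ≤ B) (hB : ∀ v ∈ levels y, v * gq q (cnt y v) ≤ B) :
    lqNorm q y ≤ ((levels y).card : ℝ) * B := by
  classical
  have hLne := levels_nonempty hy
  have hL1 : (1 : ℝ) ≤ (levels y).card := by
    have := Finset.card_pos.mpr hLne
    exact_mod_cast this
  by_cases hqt : q = ∞
  · subst hqt
    rw [lqNorm, if_pos rfl]
    have hsup : ((Finset.univ.sup fun i => ‖y i‖₊ : ℝ≥0) : ℝ) ≤ B := by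
      have : (Finset.univ.sup fun i => ‖y i‖₊) ≤ ⟨B, hB0⟩ := by
        apply Finset.sup_le
        intro i _
        by_cases h : y i = 0
        · simp [h]; exact zero_le
        · have hmem : |y i| ∈ levels y :=
            Finset.mem_image.mpr ⟨i, Finset.mem_filter.mpr ⟨Finset.mem_univ i, h⟩, rfl⟩
          have := hB _ hmem
          rw [gq, if_pos rfl, mul_one] at this
          apply NNReal.coe_le_coe.mp
          calc (‖y i‖₊ : ℝ) = |y i| := by rw [coe_nnnorm, Real.norm_eq_abs]
            _ ≤ B := this
      exact_mod_cast this
    calc ((Finset.univ.sup fun i => ‖y i‖₊ : ℝ≥0) : ℝ) ≤ B := hsup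
      _ ≤ ((levels y).card : ℝ) * B := by nlinarith
  · set P := q.toReal with hPdef
    have hP : 1 ≤ P := toReal_one_le hq hqt
    have hPpos : 0 < P := by linarith
    rw [lqNorm, if_neg hqt]
    have hsum := lq_sum_eq y hP
    have hle : ∑ i, |y i| ^ P ≤ ((levels y).card : ℝ) * B ^ P := by
      rw [hsum]
      calc ∑ v ∈ levels y, (cnt y v : ℝ) * v ^ P ≤ ∑ v ∈ levels y, B ^ P := by
            apply Finset.sum_le_sum
            intro v hv
            rw [← gq_term hP (levels_pos hv)]
            apply Real.rpow_le_rpow _ _ (le_of_lt hPpos)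
            · have := levels_pos hv
              positivity
            · have := hB v hv
              rwa [gq, if_neg hqt] at this
        _ = ((levels y).card : ℝ) * B ^ P := by
            rw [Finset.sum_const, nsmul_eq_mul]
    have h2 := Real.rpow_le_rpow (by positivity) hle (by positivity : (0:ℝ) ≤ 1/P)
    have h3 : (((levels y).card : ℝ) * B ^ P) ^ (1/P)
        = ((levels y).card : ℝ) ^ (1/P) * B := by
      rw [Real.mul_rpow (by positivity) (by positivity),
        ← Real.rpow_mul hB0, mul_one_div_cancel (ne_of_gt hPpos), Real.rpow_one]
    rw [h3] at h2
    calc (∑ i, |y i| ^ P) ^ (1/P) ≤ ((levels y).card : ℝ) ^ (1/P) * B := h2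
      _ ≤ ((levels y).card : ℝ) * B := by
          apply mul_le_mul_of_nonneg_right _ hB0
          calc ((levels y).card : ℝ) ^ (1/P) ≤ ((levels y).card : ℝ) ^ (1:ℝ) :=
            Real.rpow_le_rpow_of_exponent_le hL1 (by rw [div_le_one hPpos]; linarith)
          _ = _ := Real.rpow_one _


lemma lq_zero {q : ℝ≥0∞} (hq : 1 ≤ q) (n : ℕ) : lqNorm q (0 : Fin n → ℝ) = 0 := by
  by_cases hqt : q = ∞
  · subst hqt
    simp [lqNorm]
  · have hP : 1 ≤ q.toReal := toReal_one_le hq hqt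
    rw [lqNorm, if_neg hqt]
    rw [show ∑ i : Fin n, |(0 : Fin n → ℝ) i| ^ q.toReal = 0 by
      apply Finset.sum_eq_zero; intro i _; simp [Real.zero_rpow (by linarith : q.toReal ≠ 0)]]
    exact Real.zero_rpow (by positivity)

lemma lq_nonneg (q : ℝ≥0∞) {n : ℕ} (x : Fin n → ℝ) : 0 ≤ lqNorm q x := by
  by_cases hqt : q = ∞
  · subst hqt; rw [lqNorm, if_pos rfl]; positivity
  · rw [lqNorm, if_neg hqt]; positivity

lemma lq_mul {q : ℝ≥0∞} (hq : 1 ≤ q) {m n : ℕ} (x : Fin m → ℝ) (y : Fin n → ℝ) :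
    lqNorm q (fun k : Fin (m*n) => x (finProdFinEquiv.symm k).1 * y (finProdFinEquiv.symm k).2)
      = lqNorm q x * lqNorm q y := by
  classical
  by_cases hqt : q = ∞
  · subst hqt
    have e1 : ∀ (N : ℕ) (z : Fin N → ℝ),
        lqNorm ∞ z = ((Finset.univ.sup fun i => ‖z i‖₊ : ℝ≥0) : ℝ) := fun N z => if_pos rfl
    rw [e1, e1, e1, ← NNReal.coe_mul]
    congr 1
    have hre : (Finset.univ.sup fun k : Fin (m*n) =>
        ‖x (finProdFinEquiv.symm k).1 * y (finProdFinEquiv.symm k).2‖₊)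
        = Finset.univ.sup fun p : Fin m × Fin n => ‖x p.1‖₊ * ‖y p.2‖₊ := by
      apply le_antisymm
      · apply Finset.sup_le
        intro k _
        rw [nnnorm_mul]
        exact Finset.le_sup (f := fun p : Fin m × Fin n => ‖x p.1‖₊ * ‖y p.2‖₊)
          (Finset.mem_univ (finProdFinEquiv.symm k))
      · apply Finset.sup_le
        intro p _
        have : ‖x p.1‖₊ * ‖y p.2‖₊
            = ‖x (finProdFinEquiv.symm (finProdFinEquiv p)).1
              * y (finProdFinEquiv.symm (finProdFinEquiv p)).2‖₊ := by
          rw [Equiv.symm_apply_apply, nnnorm_mul]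
        rw [this]
        exact Finset.le_sup (f := fun k : Fin (m*n) =>
          ‖x (finProdFinEquiv.symm k).1 * y (finProdFinEquiv.symm k).2‖₊)
          (Finset.mem_univ (finProdFinEquiv p))
    rw [hre]
    apply le_antisymm
    · apply Finset.sup_le
      intro p _
      exact mul_le_mul' (Finset.le_sup (f := fun i => ‖x i‖₊) (Finset.mem_univ p.1))
        (Finset.le_sup (f := fun i => ‖y i‖₊) (Finset.mem_univ p.2))
    · rcases isEmpty_or_nonempty (Fin m) with hm | hm
      · rw [Finset.univ_eq_empty (α := Fin m), Finset.sup_empty]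
        simp
      rcases isEmpty_or_nonempty (Fin n) with hn | hn
      · rw [Finset.univ_eq_empty (α := Fin n), Finset.sup_empty]
        simp
      obtain ⟨a, _, ha⟩ := Finset.exists_mem_eq_sup Finset.univ
        (Finset.univ_nonempty (α := Fin m)) (fun i => ‖x i‖₊)
      obtain ⟨b, _, hb⟩ := Finset.exists_mem_eq_sup Finset.univ
        (Finset.univ_nonempty (α := Fin n)) (fun i => ‖y i‖₊)
      rw [ha, hb]
      exact Finset.le_sup (f := fun p : Fin m × Fin n => ‖x p.1‖₊ * ‖y p.2‖₊)
        (Finset.mem_univ (a, b))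
  · have hP : 1 ≤ q.toReal := toReal_one_le hq hqt
    have hPpos : 0 < q.toReal := by linarith
    simp only [lqNorm, if_neg hqt]
    set P := q.toReal
    have hsum : ∑ k : Fin (m*n), |x (finProdFinEquiv.symm k).1 * y (finProdFinEquiv.symm k).2| ^ P
        = (∑ i, |x i| ^ P) * (∑ j, |y j| ^ P) := by
      calc (∑ k : Fin (m*n), |x (finProdFinEquiv.symm k).1 * y (finProdFinEquiv.symm k).2| ^ P)
          = ∑ p : Fin m × Fin n, |x p.1 * y p.2| ^ P :=
            Fintype.sum_equiv finProdFinEquiv.symm _ _ (fun k => rfl)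
        _ = ∑ p : Fin m × Fin n, |x p.1| ^ P * |y p.2| ^ P := by
            apply Finset.sum_congr rfl
            intro p _
            rw [abs_mul, Real.mul_rpow (abs_nonneg _) (abs_nonneg _)]
        _ = (∑ i, |x i| ^ P) * (∑ j, |y j| ^ P) := by
            rw [Finset.sum_mul_sum]
            exact Fintype.sum_prod_type _
    rw [hsum, Real.mul_rpow (by positivity) (by positivity)]

/-- Dimensions of iterated tensor powers. -/
def tdim (n : ℕ) : ℕ → ℕ
  | 0 => n
  | k+1 => tdim n k * n

/-- Iterated tensor powers of a vector, via `finProdFinEquiv`. -/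
noncomputable def tpow {n : ℕ} (x : Fin n → ℝ) : (k : ℕ) → Fin (tdim n k) → ℝ
  | 0 => x
  | k+1 => fun j => tpow x k (finProdFinEquiv.symm j).1 * x (finProdFinEquiv.symm j).2

lemma N_tpow (hmul : S.IsMultiplicative) {n : ℕ} (x : Fin n → ℝ) (k : ℕ) :
    S.N (tdim n k) (tpow x k) = S.N n x ^ (k+1) := by
  induction k with
  | zero => simp [tpow, tdim]
  | succ k ih =>
    have h := hmul (tpow x k) x
    rw [ih] at h
    calc S.N (tdim n (k+1)) (tpow x (k+1)) = S.N n x ^ (k+1) * S.N n x := h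
      _ = S.N n x ^ (k+2) := by ring

lemma lq_tpow {q : ℝ≥0∞} (hq : 1 ≤ q) {n : ℕ} (x : Fin n → ℝ) (k : ℕ) :
    lqNorm q (tpow x k) = lqNorm q x ^ (k+1) := by
  induction k with
  | zero => simp [tpow]; rfl
  | succ k ih =>
    have h := lq_mul hq (tpow x k) x
    rw [ih] at h
    calc lqNorm q (tpow x (k+1)) = lqNorm q x ^ (k+1) * lqNorm q x := h
      _ = lqNorm q x ^ (k+2) := by ring

lemma tpow_ne_zero {n : ℕ} {x : Fin n → ℝ} (hx : x ≠ 0) (k : ℕ) :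
    tpow x k ≠ 0 := by
  have hex : ∃ i, x i ≠ 0 := by
    by_contra h
    push_neg at h
    exact hx (funext h)
  obtain ⟨i₀, hi₀⟩ := hex
  have : ∀ k, ∃ j, tpow x k j ≠ 0 := by
    intro k
    induction k with
    | zero => exact ⟨i₀, hi₀⟩
    | succ k ih =>
      obtain ⟨j, hj⟩ := ih
      refine ⟨finProdFinEquiv (j, i₀), ?_⟩
      show tpow x k (finProdFinEquiv.symm (finProdFinEquiv (j, i₀))).1
        * x (finProdFinEquiv.symm (finProdFinEquiv (j, i₀))).2 ≠ 0
      rw [Equiv.symm_apply_apply]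
      exact mul_ne_zero hj hi₀
  obtain ⟨j, hj⟩ := this k
  intro h
  exact hj (by rw [h]; rfl)

lemma tpow_entry {n : ℕ} (x : Fin n → ℝ) (k : ℕ) (j : Fin (tdim n k)) :
    ∃ a : Fin n → Fin (k+2), |tpow x k j| = ∏ i, |x i| ^ (a i : ℕ) := by
  classical
  induction k with
  | zero =>
    refine ⟨fun i => ⟨if i = j then 1 else 0, by split <;> omega⟩, ?_⟩
    calc |tpow x 0 j| = |x j| := by simp [tpow]
      _ = ∏ i : Fin n, |x i| ^ (if i = j then 1 else 0) := by
          symm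
          have heq := Finset.prod_eq_single (s := Finset.univ)
            (f := fun i : Fin n => |x i| ^ (if i = j then 1 else 0)) j
            (fun i _ hi => by simp [hi]) (fun h => absurd (Finset.mem_univ _) h)
          rw [heq]
          simp
          intro h; exact absurd rfl h
      _ = _ := Finset.prod_congr rfl (fun i _ => by by_cases h : i = j <;> simp [h])
  | succ k ih =>
    obtain ⟨a, ha⟩ := ih (finProdFinEquiv.symm (j : Fin (tdim n k * n))).1
    set i₂ := (finProdFinEquiv.symm (j : Fin (tdim n k * n))).2 with hi₂
    refine ⟨fun i => ⟨(a i : ℕ) + (if i = i₂ then 1 else 0), by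
      have := (a i).isLt; split <;> omega⟩, ?_⟩
    have habs : |tpow x (k+1) j| = |tpow x k (finProdFinEquiv.symm (j : Fin (tdim n k * n))).1| * |x i₂| := by
      show |tpow x k _ * x _| = _
      rw [abs_mul]
    rw [habs, ha]
    have : ∀ i : Fin n, |x i| ^ (((a i : ℕ) + if i = i₂ then 1 else 0))
        = |x i| ^ (a i : ℕ) * |x i| ^ (if i = i₂ then 1 else 0) := fun i => pow_add _ _ _
    simp only [this]
    rw [Finset.prod_mul_distrib]
    congr 1
    rw [Finset.prod_eq_single i₂]
    · simp
    · intro i _ hi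
      simp [hi]
    · intro h
      exact absurd (Finset.mem_univ i₂) h

lemma levels_tpow_card {n : ℕ} (x : Fin n → ℝ) (k : ℕ) :
    ((levels (tpow x k)).card : ℝ) ≤ ((k+2 : ℕ) : ℝ) ^ n := by
  classical
  have hsub : levels (tpow x k) ⊆
      Finset.image (fun a : Fin n → Fin (k+2) => ∏ i, |x i| ^ (a i : ℕ)) Finset.univ := by
    intro v hv
    simp only [levels, Finset.mem_image, Finset.mem_filter, Finset.mem_univ, true_and] at hv ⊢
    obtain ⟨j, _, rfl⟩ := hv
    obtain ⟨a, ha⟩ := tpow_entry x k j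
    exact ⟨a, ha.symm⟩
  have h1 : (levels (tpow x k)).card ≤ (k+2)^n := by
    calc (levels (tpow x k)).card
        ≤ (Finset.image (fun a : Fin n → Fin (k+2) => ∏ i, |x i| ^ (a i : ℕ)) Finset.univ).card :=
          Finset.card_le_card hsub
      _ ≤ (Finset.univ : Finset (Fin n → Fin (k+2))).card := Finset.card_image_le
      _ = (k+2)^n := by simp [Fintype.card_fun]
  calc ((levels (tpow x k)).card : ℝ) ≤ (((k+2)^n : ℕ) : ℝ) := by exact_mod_cast h1
    _ = ((k+2 : ℕ) : ℝ) ^ n := by push_cast; ring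

lemma pow_squeeze {a b : ℝ} (ha : 0 ≤ a) (hb : 0 ≤ b) (n : ℕ)
    (h : ∀ k : ℕ, a ^ (k+1) ≤ ((k+2 : ℕ) : ℝ) ^ n * b ^ (k+1)) : a ≤ b := by
  rcases eq_or_lt_of_le hb with hb0 | hbpos
  · have := h 0
    simp only [← hb0] at this
    calc a = a ^ 1 := (pow_one a).symm
      _ ≤ ((2:ℕ):ℝ)^n * 0 ^ 1 := by exact_mod_cast this
      _ = 0 := by ring
      _ ≤ b := by rw [← hb0]
  · by_contra hab
    push_neg at hab
    set r := a / b with hr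
    have hr1 : 1 < r := (one_lt_div hbpos).mpr hab
    have hkey : ∀ k : ℕ, (1:ℝ)/2^n ≤ ((k+1:ℕ):ℝ)^n / r^(k+1) := by
      intro k
      have hb1 : (0:ℝ) < b^(k+1) := by positivity
      have h1 : r^(k+1) ≤ ((k+2:ℕ):ℝ)^n := by
        rw [hr, div_pow, div_le_iff₀ hb1]
        exact h k
      have h2 : ((k+2:ℕ):ℝ)^n ≤ 2^n * ((k+1:ℕ):ℝ)^n := by
        rw [← mul_pow]
        apply pow_le_pow_left₀ (by positivity)
        push_cast
        linarith
      have hrm : (0:ℝ) < r^(k+1) := by positivity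
      rw [le_div_iff₀ hrm]
      calc 1/2^n * r^(k+1) ≤ 1/2^n * (2^n * ((k+1:ℕ):ℝ)^n) := by
            apply mul_le_mul_of_nonneg_left (h1.trans h2) (by positivity)
        _ = ((k+1:ℕ):ℝ)^n := by
            field_simp
    have T := tendsto_pow_const_div_const_pow_of_one_lt n hr1
    have hev : ∀ᶠ m : ℕ in Filter.atTop, (m:ℝ)^n / r^m < 1/2^n :=
      T.eventually_lt_const (by positivity)
    obtain ⟨m, hm2, hm1⟩ := (hev.and (Filter.eventually_ge_atTop 1)).exists
    obtain ⟨k, rfl⟩ := Nat.exists_eq_add_of_le hm1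
    have h3 := hkey k
    rw [Nat.add_comm 1 k] at hm2
    have : ((k+1:ℕ):ℝ)^n / r^(k+1) < 1/2^n := by exact_mod_cast hm2
    linarith


end AubrunNechita

open AubrunNechita in
/-- (Aubrun–Nechita) Every multiplicative system of norms is the `ℓ^q`-norm
for some `q ∈ [1,∞]`. -/
theorem multiplicative_normSystem_eq_lqNorm
    (S : NormSystem) (hmul : S.IsMultiplicative) :
    ∃ q : ℝ≥0∞, 1 ≤ q ∧ ∀ (n : ℕ), 1 ≤ n → ∀ x : Fin n → ℝ, S.N n x = lqNorm q x := by
  classical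
  set c := Real.logb 2 (onesN S 2) with hc
  have hf2pos : (0:ℝ) < onesN S 2 := onesN_pos S (by norm_num)
  have hf2 : 1 ≤ onesN S 2 := onesN_ge_one S hmul (by norm_num)
  have hc0 : 0 ≤ c := Real.logb_nonneg (by norm_num) hf2
  have hc1 : c ≤ 1 := by
    rw [hc, Real.logb, div_le_one (Real.log_pos (by norm_num))]
    exact Real.log_le_log (by linarith) (onesN_two_le S hmul)
  set q : ℝ≥0∞ := if c = 0 then ⊤ else ENNReal.ofReal (1/c) with hqdef
  have hq1 : 1 ≤ q := by
    rw [hqdef]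
    split
    · exact le_top
    · rename_i hcz
      have hcpos : 0 < c := lt_of_le_of_ne hc0 (Ne.symm hcz)
      rw [ENNReal.one_le_ofReal, le_div_iff₀ hcpos, one_mul]
      exact hc1
  have bridge : ∀ m : ℕ, 1 ≤ m → onesN S m = gq q m := by
    intro m hm
    by_cases hcz : c = 0
    · rw [hqdef, gq, if_pos hcz, if_pos rfl, onesN_eq_rpow S hmul hm, ← hc, hcz,
        Real.rpow_zero]
    · have hcpos : 0 < c := lt_of_le_of_ne hc0 (Ne.symm hcz)
      have hqne : q ≠ ∞ := by
        rw [hqdef, if_neg hcz]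
        exact ENNReal.ofReal_ne_top
      have htr : q.toReal = 1/c := by
        rw [hqdef, if_neg hcz, ENNReal.toReal_ofReal (by positivity)]
      rw [gq, if_neg hqne, htr, one_div_one_div, onesN_eq_rpow S hmul hm, ← hc]
  refine ⟨q, hq1, ?_⟩
  intro n hn x
  by_cases hx : x = 0
  · rw [hx]
    exact (N_zero S n).trans (lq_zero hq1 n).symm
  · have ha : 0 ≤ S.N n x := N_nonneg S x
    have hb : 0 ≤ lqNorm q x := lq_nonneg q x
    have key : ∀ k : ℕ,
        S.N n x ^ (k+1) ≤ ((k+2:ℕ):ℝ)^n * lqNorm q x ^ (k+1)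
        ∧ lqNorm q x ^ (k+1) ≤ ((k+2:ℕ):ℝ)^n * S.N n x ^ (k+1) := by
      intro k
      set Y := tpow x k with hY
      have hYne : Y ≠ 0 := tpow_ne_zero hx k
      have hne : (levels Y).Nonempty := levels_nonempty hYne
      set L : ℝ := ((levels Y).card : ℝ) with hL
      have hLbound : L ≤ ((k+2:ℕ):ℝ)^n := levels_tpow_card x k
      have hL1 : (1:ℝ) ≤ L := by
        rw [hL]
        exact_mod_cast Finset.card_pos.mpr hne
      set B : ℝ := (levels Y).sup' hne (fun v => v * onesN S (cnt Y v)) with hB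
      have hbridge : ∀ v ∈ levels Y, v * gq q (cnt Y v) = v * onesN S (cnt Y v) := by
        intro v hv
        rw [bridge _ (cnt_pos hv)]
      have hB0 : 0 ≤ B := by
        obtain ⟨v₀, hv₀⟩ := hne
        have h1 : 0 ≤ v₀ * onesN S (cnt Y v₀) :=
          mul_nonneg (le_of_lt (levels_pos hv₀)) (N_nonneg S _)
        rw [hB]
        exact le_trans h1 (Finset.le_sup' (fun v => v * onesN S (cnt Y v)) hv₀)
      have hNle : S.N (tdim n k) Y ≤ L * B := by
        calc S.N (tdim n k) Y ≤ ∑ v ∈ levels Y, v * onesN S (cnt Y v) := N_upper S hmul Y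
          _ ≤ (levels Y).card • B := by
            apply Finset.sum_le_card_nsmul _ _ B
            intro v hv
            rw [hB]
            exact Finset.le_sup' (fun v => v * onesN S (cnt Y v)) hv
          _ = L * B := by rw [nsmul_eq_mul, hL]
      have hBlq : B ≤ lqNorm q Y := by
        apply Finset.sup'_le
        intro v hv
        rw [← hbridge v hv]
        exact lq_lower hq1 Y hv
      have hlqle : lqNorm q Y ≤ L * B := by
        rw [hL]
        apply lq_upper hq1 hYne hB0
        intro v hv
        rw [hbridge v hv, hB]
        exact Finset.le_sup' (fun v => v * onesN S (cnt Y v)) hv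
      have hBN : B ≤ S.N (tdim n k) Y := by
        apply Finset.sup'_le
        intro v hv
        exact N_lower S hmul Y hv
      have hNt : S.N (tdim n k) Y = S.N n x ^ (k+1) := N_tpow S hmul x k
      have hlqt : lqNorm q Y = lqNorm q x ^ (k+1) := lq_tpow hq1 x k
      constructor
      · calc S.N n x ^ (k+1) = S.N (tdim n k) Y := hNt.symm
          _ ≤ L * B := hNle
          _ ≤ L * lqNorm q Y := mul_le_mul_of_nonneg_left hBlq (by linarith)
          _ ≤ ((k+2:ℕ):ℝ)^n * lqNorm q Y :=
            mul_le_mul_of_nonneg_right hLbound (by rw [hlqt]; positivity)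
          _ = ((k+2:ℕ):ℝ)^n * lqNorm q x ^ (k+1) := by rw [hlqt]
      · calc lqNorm q x ^ (k+1) = lqNorm q Y := hlqt.symm
          _ ≤ L * B := hlqle
          _ ≤ L * S.N (tdim n k) Y := mul_le_mul_of_nonneg_left hBN (by linarith)
          _ ≤ ((k+2:ℕ):ℝ)^n * S.N (tdim n k) Y :=
            mul_le_mul_of_nonneg_right hLbound (by rw [hNt]; positivity)
          _ = ((k+2:ℕ):ℝ)^n * S.N n x ^ (k+1) := by rw [hNt]
    exact le_antisymm
      (pow_squeeze ha hb n (fun k => (key k).1))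
      (pow_squeeze hb ha n (fun k => (key k).2))
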